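/- For every real x ≥ 0, e^{-x} = (1/√π) ∫_0^∞ e^{-y - x²/(4y)} y^{-1/2} dy. -/

import Mathlib

open MeasureTheory Real Set

private lemma img1' {b : ℝ} (hb : 0 < b) : (fun u : ℝ => u - b / u) '' Ioi 0 = univ := by
  apply eq_univ_of_forall
  intro v
  refine ⟨(v + Real.sqrt (v ^ 2 + 4 * b)) / 2, ?_, ?_⟩
  · have h1 : |v| < Real.sqrt (v ^ 2 + 4 * b) := by
      rw [← Real.sqrt_sq_eq_abs]
      exact Real.sqrt_lt_sqrt (sq_nonneg v) (by linarith)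
    have := neg_abs_le v
    simp only [mem_Ioi]
    nlinarith [abs_nonneg v]
  · set u := (v + Real.sqrt (v ^ 2 + 4 * b)) / 2 with hu
    have h1 : |v| < Real.sqrt (v ^ 2 + 4 * b) := by
      rw [← Real.sqrt_sq_eq_abs]
      exact Real.sqrt_lt_sqrt (sq_nonneg v) (by linarith)
    have hupos : 0 < u := by have := neg_abs_le v; rw [hu]; nlinarith [abs_nonneg v]
    have hsq : Real.sqrt (v ^ 2 + 4 * b) ^ 2 = v ^ 2 + 4 * b :=
      Real.sq_sqrt (by nlinarith [sq_nonneg v])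
    have key : u ^ 2 - v * u - b = 0 := by rw [hu]; field_simp; nlinarith [hsq]
    field_simp
    nlinarith [key]

private lemma img2' {b : ℝ} (hb : 0 < b) : (fun u : ℝ => b / u) '' Ioi 0 = Ioi 0 := by
  ext v
  constructor
  · rintro ⟨u, hu, rfl⟩; exact div_pos hb hu
  · intro hv; exact ⟨b / v, div_pos hb hv, by field_simp⟩

private lemma img3' : (fun u : ℝ => u ^ 2) '' Ioi 0 = Ioi 0 := by
  ext v
  constructor
  · rintro ⟨u, hu, rfl⟩; exact pow_pos (mem_Ioi.1 hu) 2
  · intro hv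
    exact ⟨Real.sqrt v, Real.sqrt_pos.2 hv, Real.sq_sqrt hv.le⟩

private lemma inj1' {b : ℝ} (hb : 0 < b) : InjOn (fun u : ℝ => u - b / u) (Ioi 0) := by
  have : StrictMonoOn (fun u : ℝ => u - b / u) (Ioi 0) := by
    intro u hu v hv huv
    simp only
    have : b / v < b / u := div_lt_div_of_pos_left hb hu huv
    linarith
  exact this.injOn

private lemma inj2' {b : ℝ} (hb : 0 < b) : InjOn (fun u : ℝ => b / u) (Ioi 0) := by
  intro u hu v hv h
  simp only [mem_Ioi] at hu hv
  field_simp at h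
  exact h.symm

private lemma inj3' : InjOn (fun u : ℝ => u ^ 2) (Ioi 0) := by
  intro u hu v hv h
  simp only [mem_Ioi] at hu hv
  simp only at h
  nlinarith [sq_nonneg (u - v), sq_nonneg (u + v)]

private lemma der1' {b : ℝ} {u : ℝ} (hu : u ∈ Ioi (0:ℝ)) :
    HasDerivWithinAt (fun u : ℝ => u - b / u) (1 + b / u ^ 2) (Ioi 0) u := by
  have h2 : HasDerivAt (fun u : ℝ => b / u) (-(b / u ^ 2)) u := by
    have h0 := (hasDerivAt_inv (ne_of_gt (mem_Ioi.1 hu))).const_mul b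
    simp only [← div_eq_mul_inv, mul_neg] at h0
    exact h0
  have h : HasDerivAt (fun u : ℝ => u - b / u) (1 - -(b / u ^ 2)) u :=
    (hasDerivAt_id u).sub h2
  simpa using h.hasDerivWithinAt

private lemma der2' {b : ℝ} {u : ℝ} (hu : u ∈ Ioi (0:ℝ)) :
    HasDerivWithinAt (fun u : ℝ => b / u) (-(b / u ^ 2)) (Ioi 0) u := by
  have h : HasDerivAt (fun u : ℝ => b / u) (-(b / u ^ 2)) u := by
    have h0 := (hasDerivAt_inv (ne_of_gt (mem_Ioi.1 hu))).const_mul b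
    simp only [← div_eq_mul_inv, mul_neg] at h0
    exact h0
  exact h.hasDerivWithinAt

private lemma der3' {u : ℝ} : HasDerivWithinAt (fun u : ℝ => u ^ 2) (2 * u) (Ioi 0) u := by
  simpa using (hasDerivAt_pow 2 u).hasDerivWithinAt

private lemma lemA' {b : ℝ} (hb : 0 < b) :
    ∫ u in Ioi (0:ℝ), (1 + b / u ^ 2) * Real.exp (-(u - b / u) ^ 2) = Real.sqrt π := by
  have := MeasureTheory.integral_image_eq_integral_abs_deriv_smul (s := Ioi (0:ℝ))
    (f := fun u => u - b / u) (f' := fun u => 1 + b / u ^ 2) measurableSet_Ioi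
    (fun u hu => der1' hu) (inj1' hb) (fun v => Real.exp (-v ^ 2))
  rw [img1' hb, MeasureTheory.setIntegral_univ] at this
  have hg : ∫ v : ℝ, Real.exp (-v ^ 2) = Real.sqrt π := by
    simpa using integral_gaussian 1
  rw [hg] at this
  rw [this]
  apply setIntegral_congr_fun measurableSet_Ioi
  intro u hu
  have hu' : (0:ℝ) < u := hu
  have hpos : 0 < 1 + b / u ^ 2 := by positivity
  simp [smul_eq_mul, abs_of_pos hpos]

private lemma lemInt' {b : ℝ} (hb : 0 < b) :
    IntegrableOn (fun u : ℝ => (1 + b / u ^ 2) * Real.exp (-(u - b / u) ^ 2)) (Ioi 0) := by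
  have := (MeasureTheory.integrableOn_image_iff_integrableOn_abs_deriv_smul (s := Ioi (0:ℝ))
    (f := fun u => u - b / u) (f' := fun u => 1 + b / u ^ 2) measurableSet_Ioi
    (fun u hu => der1' hu) (inj1' hb) (fun v => Real.exp (-v ^ 2))).mp
  rw [img1' hb] at this
  have hgauss : IntegrableOn (fun v : ℝ => Real.exp (-v ^ 2)) univ := by
    rw [integrableOn_univ]
    simpa using integrable_exp_neg_mul_sq (one_pos)
  have h2 := this hgauss
  apply h2.congr_fun ?_ measurableSet_Ioi
  intro u hu
  have hu' : (0:ℝ) < u := hu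
  have hpos : 0 < 1 + b / u ^ 2 := by positivity
  simp [smul_eq_mul, abs_of_pos hpos]

private lemma lemIntg' {b : ℝ} (hb : 0 < b) :
    IntegrableOn (fun u : ℝ => Real.exp (-(u - b / u) ^ 2)) (Ioi 0) := by
  have hc : ContinuousOn (fun u : ℝ => Real.exp (-(u - b / u) ^ 2)) (Ioi 0) := by
    apply ContinuousOn.rexp
    apply ContinuousOn.neg
    apply ContinuousOn.pow
    exact continuousOn_id.sub (continuousOn_const.div continuousOn_id fun u hu => ne_of_gt hu)
  apply (lemInt' hb).mono' (hc.aestronglyMeasurable measurableSet_Ioi)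
  filter_upwards [ae_restrict_mem measurableSet_Ioi] with u hu
  have hu' : (0:ℝ) < u := hu
  have h1 : (0:ℝ) < 1 + b / u ^ 2 := by positivity
  rw [Real.norm_eq_abs, abs_of_pos (Real.exp_pos _)]
  nlinarith [Real.exp_pos (-(u - b / u) ^ 2), div_pos hb (pow_pos hu' 2)]

private lemma lemB' {b : ℝ} (hb : 0 < b) :
    ∫ u in Ioi (0:ℝ), Real.exp (-(u - b / u) ^ 2) =
      ∫ u in Ioi (0:ℝ), (b / u ^ 2) * Real.exp (-(u - b / u) ^ 2) := by
  have := MeasureTheory.integral_image_eq_integral_abs_deriv_smul (s := Ioi (0:ℝ))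
    measurableSet_Ioi (fun u hu => der2' (b := b) hu) (inj2' hb)
    (fun v => Real.exp (-(v - b / v) ^ 2))
  rw [img2' hb] at this
  rw [this]
  apply setIntegral_congr_fun measurableSet_Ioi
  intro u hu
  have hu' : (0:ℝ) < u := hu
  have hbu : (0:ℝ) < b / u ^ 2 := by positivity
  have harg : b / u - b / (b / u) = -(u - b / u) := by field_simp; ring
  simp only [smul_eq_mul, abs_neg, abs_of_pos hbu, harg, neg_sq]

private lemma halfg' {b : ℝ} (hb : 0 < b) :
    ∫ u in Ioi (0:ℝ), Real.exp (-(u - b / u) ^ 2) = Real.sqrt π / 2 := by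
  have hsplit : ∫ u in Ioi (0:ℝ), (b / u ^ 2) * Real.exp (-(u - b / u) ^ 2)
      = (∫ u in Ioi (0:ℝ), (1 + b / u ^ 2) * Real.exp (-(u - b / u) ^ 2))
        - ∫ u in Ioi (0:ℝ), Real.exp (-(u - b / u) ^ 2) := by
    rw [← integral_sub (lemInt' hb) (lemIntg' hb)]
    apply setIntegral_congr_fun measurableSet_Ioi
    intro u hu
    ring
  have hB := lemB' hb
  rw [hsplit, lemA' hb] at hB
  linarith

private lemma keylemma {b : ℝ} (hb : 0 ≤ b) :
    ∫ u in Ioi (0:ℝ), Real.exp (-(u ^ 2 + b ^ 2 / u ^ 2)) =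
      Real.sqrt π / 2 * Real.exp (-(2 * b)) := by
  rcases eq_or_lt_of_le hb with rfl | hb
  · simp only [ne_eq, OfNat.ofNat_ne_zero, not_false_eq_true, zero_pow, zero_div, add_zero,
      mul_zero, neg_zero, Real.exp_zero, mul_one]
    simpa using integral_gaussian_Ioi 1
  · have : ∀ u ∈ Ioi (0:ℝ), Real.exp (-(u ^ 2 + b ^ 2 / u ^ 2))
        = Real.exp (-(2 * b)) * Real.exp (-(u - b / u) ^ 2) := by
      intro u hu
      have hu' : (0:ℝ) < u := hu
      rw [← Real.exp_add]
      congr 1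
      field_simp
      ring
    rw [setIntegral_congr_fun measurableSet_Ioi this, integral_const_mul, halfg' hb]
    ring

theorem stmt_2 (x : ℝ) (hx : 0 ≤ x) :
    Real.exp (-x) =
      (1 / Real.sqrt π) *
        ∫ y in Set.Ioi (0 : ℝ), Real.exp (-y - x ^ 2 / (4 * y)) / Real.sqrt y := by
  have hsub := MeasureTheory.integral_image_eq_integral_abs_deriv_smul (s := Ioi (0:ℝ))
    (f := fun u => u ^ 2) (f' := fun u => 2 * u) measurableSet_Ioi
    (fun u hu => der3') inj3'
    (fun y => Real.exp (-y - x ^ 2 / (4 * y)) / Real.sqrt y)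
  rw [img3'] at hsub
  have hkey := keylemma (b := x / 2) (by linarith)
  have heq : ∫ u in Ioi (0:ℝ),
      |2 * u| • (Real.exp (-u ^ 2 - x ^ 2 / (4 * u ^ 2)) / Real.sqrt (u ^ 2))
      = 2 * ∫ u in Ioi (0:ℝ), Real.exp (-(u ^ 2 + (x / 2) ^ 2 / u ^ 2)) := by
    rw [← integral_const_mul]
    apply setIntegral_congr_fun measurableSet_Ioi
    intro u hu
    have hu' : (0:ℝ) < u := hu
    dsimp only
    rw [smul_eq_mul, abs_of_pos (by linarith), Real.sqrt_sq hu'.le]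
    have : -u ^ 2 - x ^ 2 / (4 * u ^ 2) = -(u ^ 2 + (x / 2) ^ 2 / u ^ 2) := by
      field_simp; ring
    rw [this]
    field_simp
  rw [hsub, heq, hkey]
  have hπ : (0:ℝ) < Real.sqrt π := Real.sqrt_pos.2 pi_pos
  have : (-(2 * (x / 2))) = -x := by ring
  rw [this]
  field_simp
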